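/- Let F : B₁ → B₂ be a differentiable map of Banach spaces whose derivative at 0, DF|₀, is a surjective bounded linear map with bounded right-inverse P. Suppose F − DF|₀ is Lipschitz with constant 1/(2‖P‖) on the closed ball of radius δ′ centred at 0, and set δ = δ′/(2‖P‖). Then for every y ∈ B₂ with ‖y − F(0)‖ < δ there exists x ∈ B₁ with F(x) = y. -/

import Mathlib

theorem stmt_1 {B₁ B₂ : Type*} [NormedAddCommGroup B₁] [NormedSpace ℝ B₁] [CompleteSpace B₁]
    [NormedAddCommGroup B₂] [NormedSpace ℝ B₂] [CompleteSpace B₂]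
    (F : B₁ → B₂) (DF : B₁ →L[ℝ] B₂) (hF : HasFDerivAt F DF 0)
    (hsurj : Function.Surjective DF)
    (P : B₂ →L[ℝ] B₁) (hP : ∀ y, DF (P y) = y)
    (δ' : ℝ) (hδ' : 0 < δ')
    (hLip : LipschitzOnWith (Real.toNNReal ((2 * ‖P‖)⁻¹)) (fun x => F x - DF x)
      (Metric.closedBall 0 δ'))
    (y : B₂) (hy : ‖y - F 0‖ < δ' / (2 * ‖P‖)) :
    ∃ x : B₁, F x = y := by
  rcases eq_or_lt_of_le (norm_nonneg P) with h0 | hPpos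
  · exfalso
    rw [← h0] at hy
    simp at hy
    exact absurd hy (not_lt.2 (norm_nonneg _))
  have hρpos : 0 < δ' / ‖P‖ := div_pos hδ' hPpos
  set h : B₂ → B₂ := fun z => z + (y - F (P z)) with hh
  have hPz : ∀ z ∈ Metric.closedBall (0 : B₂) (δ' / ‖P‖),
      P z ∈ Metric.closedBall (0 : B₁) δ' := by
    intro z hz
    rw [Metric.mem_closedBall, dist_zero_right] at hz ⊢
    calc ‖P z‖ ≤ ‖P‖ * ‖z‖ := P.le_opNorm z
    _ ≤ ‖P‖ * (δ' / ‖P‖) := mul_le_mul_of_nonneg_left hz (norm_nonneg P)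
    _ = δ' := by field_simp
  have key : ∀ z ∈ Metric.closedBall (0 : B₂) (δ' / ‖P‖),
      ∀ z' ∈ Metric.closedBall (0 : B₂) (δ' / ‖P‖),
      dist (h z) (h z') ≤ (1/2 : ℝ) * dist z z' := by
    intro z hz z' hz'
    have hdiff : h z - h z' =
        -((F (P z) - DF (P z)) - (F (P z') - DF (P z'))) := by
      simp only [hh, hP]
      abel
    have hLdist := hLip.dist_le_mul (P z) (hPz z hz) (P z') (hPz z' hz')
    have hc : ((Real.toNNReal ((2 * ‖P‖)⁻¹) : NNReal) : ℝ) = (2 * ‖P‖)⁻¹ :=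
      Real.coe_toNNReal _ (by positivity)
    rw [hc] at hLdist
    have h1 : dist (h z) (h z') = ‖(F (P z) - DF (P z)) - (F (P z') - DF (P z'))‖ := by
      rw [dist_eq_norm, hdiff, norm_neg]
    rw [h1]
    calc ‖(F (P z) - DF (P z)) - (F (P z') - DF (P z'))‖
        ≤ (2 * ‖P‖)⁻¹ * dist (P z) (P z') := by
          simpa [dist_eq_norm] using hLdist
    _ ≤ (2 * ‖P‖)⁻¹ * (‖P‖ * dist z z') := by
        apply mul_le_mul_of_nonneg_left _ (by positivity)
        simpa [dist_eq_norm, ← map_sub] using P.le_opNorm (z - z')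
    _ = (1/2 : ℝ) * dist z z' := by field_simp
  have hLipH : LipschitzOnWith (1/2 : NNReal) h (Metric.closedBall 0 (δ' / ‖P‖)) := by
    apply LipschitzOnWith.of_dist_le_mul
    intro a ha b hb
    simpa using key a ha b hb
  have hmaps : Set.MapsTo h (Metric.closedBall 0 (δ' / ‖P‖))
      (Metric.closedBall 0 (δ' / ‖P‖)) := by
    intro z hz
    rw [Metric.mem_closedBall, dist_zero_right]
    have h0K : (0 : B₂) ∈ Metric.closedBall (0 : B₂) (δ' / ‖P‖) :=
      Metric.mem_closedBall_self hρpos.le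
    have hh0 : h 0 = y - F 0 := by simp [hh]
    have hzn : ‖z‖ ≤ δ' / ‖P‖ := by
      rw [Metric.mem_closedBall, dist_zero_right] at hz; exact hz
    have hsplit : h z = (h z - h 0) + h 0 := by abel
    calc ‖h z‖ = ‖(h z - h 0) + h 0‖ := by rw [← hsplit]
    _ ≤ ‖h z - h 0‖ + ‖h 0‖ := norm_add_le _ _
    _ ≤ (1/2 : ℝ) * ‖z‖ + ‖y - F 0‖ := by
        gcongr
        · simpa [dist_eq_norm] using key z hz 0 h0K
        · exact le_of_eq (by rw [hh0])
    _ ≤ (1/2 : ℝ) * (δ' / ‖P‖) + δ' / (2 * ‖P‖) := by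
        gcongr
    _ = δ' / ‖P‖ := by field_simp; ring
  have hcontr : ContractingWith (1/2 : NNReal) (hmaps.restrict h _ _) := by
    constructor
    · rw [← NNReal.coe_lt_coe]
      norm_num
    · exact hLipH.mapsToRestrict hmaps
  obtain ⟨z, hzK, hfix, -⟩ := hcontr.exists_fixedPoint'
    (Metric.isClosed_closedBall.isComplete) hmaps (Metric.mem_closedBall_self hρpos.le)
    (edist_ne_top _ _)
  refine ⟨P z, ?_⟩
  have heq : z + (y - F (P z)) = z := hfix
  rw [add_eq_left, sub_eq_zero] at heq
  exact heq.symm
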